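/- For every positive integer M and every real x, the complex series i ∑_{m=1}^M ∑_{n=0}^∞ x^(2n+1) / ( (2M)^(2n+1)(2n+1) ) · ( 1/( x(m−1/2)/M + i )^(2n+1) − 1/( x(m−1/2)/M − i )^(2n+1) ) converges (the sum over m being finite and the sum over n convergent for each m) and its value equals arctan(x) (viewed as a complex number). -/

import Mathlib

open Complex

lemma hasSum_odd_pow_div (v : ℂ) (hv : ‖v‖ < 1) :
    HasSum (fun n : ℕ => v ^ (2 * n + 1) / (2 * (n : ℂ) + 1)) (I * Complex.arctan (-I * v)) := by
  have h0 : ‖-I * v‖ < 1 := by simpa [norm_mul] using hv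
  have h := (Complex.hasSum_arctan h0).mul_left I
  have key : ∀ n : ℕ, I * ((-1 : ℂ) ^ n * (-I * v) ^ (2 * n + 1) / ((2 * n + 1 : ℕ) : ℂ))
      = v ^ (2 * n + 1) / (2 * (n : ℂ) + 1) := by
    intro n
    have e : (-I * v) ^ (2 * n + 1) = (-1 : ℂ) ^ n * (-I) * v ^ (2 * n + 1) := by
      rw [mul_pow, pow_succ, pow_mul]
      norm_num [pow_two, Complex.I_mul_I]
    calc I * ((-1 : ℂ) ^ n * (-I * v) ^ (2 * n + 1) / ((2 * n + 1 : ℕ) : ℂ))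
        = (I * -I) * (((-1 : ℂ) ^ n * (-1 : ℂ) ^ n) * v ^ (2 * n + 1)) / ((2 * n + 1 : ℕ) : ℂ) := by
          rw [e]; ring
      _ = v ^ (2 * n + 1) / (2 * (n : ℂ) + 1) := by
          rw [← mul_pow]
          push_cast
          norm_num [Complex.I_mul_I]
  rwa [funext key] at h

set_option maxHeartbeats 1000000 in
lemma aux_m (M : ℕ) (hM : 0 < M) (x : ℝ) (m : ℕ) (hm : 1 ≤ m) :
    HasSum (fun n : ℕ =>
      (x : ℂ) ^ (2 * n + 1) / ((2 * (M : ℂ)) ^ (2 * n + 1) * (2 * (n : ℂ) + 1)) *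
        (1 / ((x : ℂ) * (((m : ℂ) - 1 / 2) / (M : ℂ)) + I) ^ (2 * n + 1) -
         1 / ((x : ℂ) * (((m : ℂ) - 1 / 2) / (M : ℂ)) - I) ^ (2 * n + 1)))
      (-I * ((Real.arctan (m * x / M) - Real.arctan (((m : ℝ) - 1) * x / M) : ℝ) : ℂ)) := by
  have hMpos : (0 : ℝ) < M := by exact_mod_cast hM
  have hM0 : (M : ℝ) ≠ 0 := hMpos.ne'
  have hMC : (M : ℂ) ≠ 0 := by exact_mod_cast (Complex.ofReal_ne_zero.mpr hM0)
  have hm1 : (1 : ℝ) ≤ (m : ℝ) := by exact_mod_cast hm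
  set c : ℝ := (2 * (m : ℝ) - 1) * x with hc
  set d : ℂ := (c : ℂ) + 2 * (M : ℂ) * I with hdd
  have hdim : d.im = 2 * M := by simp [hdd]
  have hdre : d.re = c := by simp [hdd]
  have hd : d ≠ 0 := by
    intro h
    rw [h] at hdim
    simp at hdim
    exact hM.ne' hdim
  set u : ℂ := (x : ℂ) / d with huu
  have hnd : ‖d‖ ^ 2 = c ^ 2 + (2 * M) ^ 2 := by
    rw [Complex.sq_norm, Complex.normSq_apply, hdre, hdim]; ring
  have hxd : ‖(x : ℂ)‖ < ‖d‖ := by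
    apply lt_of_pow_lt_pow_left₀ 2 (norm_nonneg d)
    rw [hnd, Complex.norm_real, Real.norm_eq_abs, _root_.sq_abs, hc]
    have ha : (0:ℝ) ≤ (4*(m:ℝ)^2 - 4*m) * x^2 := mul_nonneg (by nlinarith) (sq_nonneg x)
    nlinarith [ha, mul_pos hMpos hMpos]
  have hu : ‖u‖ < 1 := by
    rw [huu, norm_div]
    exact (div_lt_one ((norm_nonneg _).trans_lt hxd)).mpr hxd
  -- rewrite the summand
  have e1 : (2 * (M : ℂ)) * ((x : ℂ) * (((m : ℂ) - 1 / 2) / (M : ℂ)) + I) = d := by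
    rw [hdd, hc]; push_cast; field_simp
  have e2 : (2 * (M : ℂ)) * ((x : ℂ) * (((m : ℂ) - 1 / 2) / (M : ℂ)) - I) = (starRingEnd ℂ) d := by
    rw [hdd, hc]
    simp only [map_add, map_mul, Complex.conj_I, Complex.conj_ofReal, map_ofNat, map_natCast]
    push_cast; field_simp; ring
  have hcu : (starRingEnd ℂ) u = (x : ℂ) / (starRingEnd ℂ) d := by
    rw [huu, map_div₀, Complex.conj_ofReal]
  have hfun : (fun n : ℕ =>
      (x : ℂ) ^ (2 * n + 1) / ((2 * (M : ℂ)) ^ (2 * n + 1) * (2 * (n : ℂ) + 1)) *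
        (1 / ((x : ℂ) * (((m : ℂ) - 1 / 2) / (M : ℂ)) + I) ^ (2 * n + 1) -
         1 / ((x : ℂ) * (((m : ℂ) - 1 / 2) / (M : ℂ)) - I) ^ (2 * n + 1)))
      = fun n : ℕ => u ^ (2 * n + 1) / (2 * (n : ℂ) + 1)
          - ((starRingEnd ℂ) u) ^ (2 * n + 1) / (2 * (n : ℂ) + 1) := by
    have key : ∀ (n : ℕ) (X Q a b t : ℂ),
        X ^ (2 * n + 1) / (Q ^ (2 * n + 1) * t) * (1 / a ^ (2 * n + 1) - 1 / b ^ (2 * n + 1))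
          = (X / (Q * a)) ^ (2 * n + 1) / t - (X / (Q * b)) ^ (2 * n + 1) / t := by
      intros n X Q a b t
      rw [div_pow, div_pow, mul_pow, mul_pow]
      ring
    funext n
    rw [key n]
    rw [e1, e2, hcu, huu]
  rw [hfun]
  have h1 := hasSum_odd_pow_div u hu
  have h2 := hasSum_odd_pow_div ((starRingEnd ℂ) u) (by rwa [RCLike.norm_conj])
  have hs := h1.sub h2
  convert hs using 1
  case e'_3 => rfl
  -- value computation
  have hune : u ≠ 1 := fun h => by simp [h] at hu
  have h1u : (1 : ℂ) - u ≠ 0 := sub_ne_zero.mpr (Ne.symm hune)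
  set q : ℂ := (1 + u) / (1 - u) with hqq
  have hIw : ∀ w : ℂ, (-I * w) * I = w := fun w => by
    rw [mul_right_comm, neg_mul, Complex.I_mul_I, neg_neg, one_mul]
  have harct1 : Complex.arctan (-I * u) = -I / 2 * Complex.log q := by
    rw [Complex.arctan, hIw u, hqq]
  have hcq : ((1 : ℂ) + (starRingEnd ℂ) u) / (1 - (starRingEnd ℂ) u) = (starRingEnd ℂ) q := by
    rw [hqq]
    simp only [map_div₀, map_add, map_sub, map_one]
  have harct2 : Complex.arctan (-I * (starRingEnd ℂ) u)
      = -I / 2 * Complex.log ((starRingEnd ℂ) q) := by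
    rw [Complex.arctan, hIw, hcq]
  -- explicit numerator/denominator for q
  set p1 : ℂ := ((c + x : ℝ) : ℂ) + 2 * (M : ℂ) * I with hp1
  set p2 : ℂ := ((c - x : ℝ) : ℂ) + 2 * (M : ℂ) * I with hp2
  have hp1re : p1.re = c + x := by simp [hp1]
  have hp1im : p1.im = 2 * M := by simp [hp1]
  have hp2re : p2.re = c - x := by simp [hp2]
  have hp2im : p2.im = 2 * M := by simp [hp2]
  have hp2ne : p2 ≠ 0 := by
    intro h
    rw [h] at hp2im
    simp at hp2im
    exact hM.ne' hp2im
  have hd' : (c : ℂ) + 2 * (M : ℂ) * I ≠ 0 := by rwa [hdd] at hd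
  have hqp : q = p1 / p2 := by
    have h1u2 : (1 : ℂ) - (x : ℂ) / d ≠ 0 := by rwa [huu] at h1u
    rw [hqq, huu, div_eq_div_iff h1u2 hp2ne, hp1, hp2, hdd]
    field_simp
    push_cast
    ring
  have hEnorm : Complex.normSq p2 = (c - x) ^ 2 + (2 * M) ^ 2 := by
    rw [Complex.normSq_apply, hp2re, hp2im]; ring
  have hqre : q.re = ((c + x) * (c - x) + 2 * M * (2 * M)) / ((c - x) ^ 2 + (2 * M) ^ 2) := by
    rw [hqp, Complex.div_re, hp1re, hp1im, hp2re, hp2im, hEnorm, ← add_div]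
  have hqim : q.im = (2 * M * (c - x) - (c + x) * (2 * M)) / ((c - x) ^ 2 + (2 * M) ^ 2) := by
    rw [hqp, Complex.div_im, hp1re, hp1im, hp2re, hp2im, hEnorm, div_sub_div_same]
  have hEpos : (0 : ℝ) < (c - x) ^ 2 + (2 * M) ^ 2 := by nlinarith [sq_nonneg (c - x), hMpos]
  have hApos : (0 : ℝ) < (c + x) * (c - x) + 2 * M * (2 * M) := by
    rw [hc]
    have ha : (0:ℝ) ≤ (4*(m:ℝ)^2 - 4*m) * x^2 := mul_nonneg (by nlinarith) (sq_nonneg x)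
    nlinarith [ha, mul_pos hMpos hMpos]
  have hrepos : 0 < q.re := hqre ▸ div_pos hApos hEpos
  have hargsmall : |q.arg| < Real.pi / 2 :=
    Complex.abs_arg_lt_pi_div_two_iff.mpr (Or.inl hrepos)
  have hb := abs_lt.mp hargsmall
  have harg : q.arg = Real.arctan ((2 * M * (c - x) - (c + x) * (2 * M))
      / ((c + x) * (c - x) + 2 * M * (2 * M))) := by
    conv_lhs => rw [← Real.arctan_tan (x := q.arg) hb.1 hb.2]
    rw [Complex.tan_arg, hqre, hqim]
    congr 1
    rw [div_div_div_cancel_right₀]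
    exact hEpos.ne'
  have hargne : q.arg ≠ Real.pi := by
    intro h
    rw [h, abs_of_pos Real.pi_pos] at hargsmall
    linarith [Real.pi_pos]
  have hlogconj : Complex.log ((starRingEnd ℂ) q) = (starRingEnd ℂ) (Complex.log q) :=
    Complex.log_conj q hargne
  have hsubconj : Complex.log q - (starRingEnd ℂ) (Complex.log q)
      = ((2 * q.arg : ℝ) : ℂ) * I := by
    rw [Complex.sub_conj, Complex.log_im]
  have hfin : I * (-I / 2 * Complex.log q) - I * (-I / 2 * (starRingEnd ℂ) (Complex.log q))
      = I * (-I / 2) * (((2 * q.arg : ℝ) : ℂ) * I) := by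
    rw [← hsubconj]; ring
  have hrs : Real.arctan (m * x / M) - Real.arctan (((m : ℝ) - 1) * x / M) = -q.arg := by
    rw [harg, show (2 * (M:ℝ) * (c - x) - (c + x) * (2 * M)) = -(4 * M * x) from by ring,
      neg_div, Real.arctan_neg, neg_neg]
    have h0 : 0 ≤ ((m : ℝ) * x / M) * (((m : ℝ) - 1) * x / M) := by
      rw [div_mul_div_comm]
      apply div_nonneg
      · have h1 : (0:ℝ) ≤ ((m:ℝ) * ((m:ℝ) - 1)) * x ^ 2 :=
          mul_nonneg (mul_nonneg (by linarith) (by linarith)) (sq_nonneg x)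
        nlinarith [h1]
      · positivity
    have hprod : ((m : ℝ) * x / M) * (-((((m : ℝ) - 1)) * x / M)) < 1 := by
      rw [mul_neg]
      linarith
    have hden : (1:ℝ) - ((m : ℝ) * x / M) * (-((((m : ℝ) - 1)) * x / M)) ≠ 0 := by
      rw [mul_neg, sub_neg_eq_add]
      nlinarith [h0]
    have hadd := Real.arctan_add hprod
    rw [Real.arctan_neg] at hadd
    rw [sub_eq_add_neg, hadd]
    congr 1
    rw [div_eq_div_iff hden hApos.ne', hc]
    field_simp
    ring
  rw [harct1, harct2, hlogconj, hfin, hrs]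
  push_cast
  linear_combination ((q.arg : ℂ) * I) * Complex.I_sq

lemma tele_sum (g : ℕ → ℂ) (N : ℕ) :
    ∑ m ∈ Finset.Icc 1 N, (g m - g (m - 1)) = g N - g 0 := by
  induction N with
  | zero => simp
  | succ k ih =>
    rw [Finset.sum_Icc_succ_top (Nat.succ_le_succ (Nat.zero_le k)), ih]
    simp only [Nat.add_sub_cancel]
    ring

open Complex in
theorem arctan_EMI_complex_series (M : ℕ) (hM : 0 < M) (x : ℝ) :
    (∀ m ∈ Finset.Icc 1 M, Summable (fun n : ℕ =>
      (x : ℂ) ^ (2 * n + 1) / ((2 * (M : ℂ)) ^ (2 * n + 1) * (2 * (n : ℂ) + 1)) *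
        (1 / ((x : ℂ) * (((m : ℂ) - 1 / 2) / (M : ℂ)) + I) ^ (2 * n + 1) -
         1 / ((x : ℂ) * (((m : ℂ) - 1 / 2) / (M : ℂ)) - I) ^ (2 * n + 1)))) ∧
    I * ∑ m ∈ Finset.Icc 1 M, ∑' n : ℕ,
      (x : ℂ) ^ (2 * n + 1) / ((2 * (M : ℂ)) ^ (2 * n + 1) * (2 * (n : ℂ) + 1)) *
        (1 / ((x : ℂ) * (((m : ℂ) - 1 / 2) / (M : ℂ)) + I) ^ (2 * n + 1) -
         1 / ((x : ℂ) * (((m : ℂ) - 1 / 2) / (M : ℂ)) - I) ^ (2 * n + 1))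
      = (Real.arctan x : ℂ) := by
  have hM0 : (M : ℝ) ≠ 0 := (Nat.cast_pos.mpr hM).ne'
  have key := fun (m : ℕ) (hm : m ∈ Finset.Icc 1 M) =>
    aux_m M hM x m (Finset.mem_Icc.mp hm).1
  refine ⟨fun m hm => (key m hm).summable, ?_⟩
  set g : ℕ → ℂ := fun k => ((Real.arctan (k * x / M) : ℝ) : ℂ) with hg
  have step : ∀ m ∈ Finset.Icc 1 M, (∑' n : ℕ,
      (x : ℂ) ^ (2 * n + 1) / ((2 * (M : ℂ)) ^ (2 * n + 1) * (2 * (n : ℂ) + 1)) *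
        (1 / ((x : ℂ) * (((m : ℂ) - 1 / 2) / (M : ℂ)) + I) ^ (2 * n + 1) -
         1 / ((x : ℂ) * (((m : ℂ) - 1 / 2) / (M : ℂ)) - I) ^ (2 * n + 1)))
      = -I * (g m - g (m - 1)) := by
    intro m hm
    rw [(key m hm).tsum_eq]
    have h1 : 1 ≤ m := (Finset.mem_Icc.mp hm).1
    have hcast : ((m : ℝ) - 1) = ((m - 1 : ℕ) : ℝ) := by
      rw [Nat.cast_sub h1, Nat.cast_one]
    rw [Complex.ofReal_sub, hg, hcast]
  rw [Finset.sum_congr rfl step, ← Finset.mul_sum, ← mul_assoc,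
    show Complex.I * -Complex.I = 1 from by simp, one_mul, tele_sum g M]
  have h1 : (M : ℝ) * x / M = x := by field_simp
  simp only [hg, Nat.cast_zero, zero_mul, zero_div, Real.arctan_zero, Complex.ofReal_zero,
    sub_zero, h1]
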